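/- arXiv:1402.4084 — 3 statements merged into one kernel-verified Lean document; each statement's English description precedes it below -/
import Mathlib

section
/- Suppose y_k ∈ {−1, +1} and y_k p̂_k ≤ 0 for every k = 1, …, m (every round is a mistaken round, so y_k p̂_k = −|p̂_k|). Then for every sequence u_1, …, u_m ∈ ℝ^d: Σ_{k=1}^{m} |p̂_k| ≤ (b/2)‖u_1‖² + (c/2) V_m − Σ_{k=1}^{m} y_k u_kᵀ x_k + (1/2) Σ_{k=1}^{m} (u_kᵀ x_k)² + (1/2) Σ_{k=1}^{m} x_kᵀ D_k^{−1} x_k, where V_m = Σ_{k=2}^{m} ‖u_k − u_{k−1}‖². -/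
set_option autoImplicit false

open Matrix Finset

noncomputable section
set_option linter.unusedSectionVars false
set_option linter.unusedVariables false

section helpers
variable {n : Type*} [Fintype n] [DecidableEq n]

lemma sym_dot {M : Matrix n n ℝ} (h : M.IsHermitian) (a v : n → ℝ) :
    (M *ᵥ a) ⬝ᵥ v = a ⬝ᵥ (M *ᵥ v) := by
  have ht : Mᵀ = M := by rw [← conjTranspose_eq_transpose_of_trivial, h.eq]
  rw [dotProduct_mulVec, ← ht, vecMul_transpose, ht]

lemma posDef_smul_one {r : ℝ} (hr : 0 < r) : ((r • (1 : Matrix n n ℝ))).PosDef := by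
  rw [smul_one_eq_diagonal]
  exact posDef_diagonal_iff.mpr fun _ => hr

lemma posSemidef_vecMulVec (a : n → ℝ) : (vecMulVec a a).PosSemidef := by
  have := posSemidef_self_mul_conjTranspose (replicateCol (Fin 1) a)
  rw [conjTranspose_replicateCol, star_trivial] at this
  convert this using 1
  exact vecMulVec_eq (Fin 1) a a

lemma quad_nonneg {M : Matrix n n ℝ} (h : M.PosSemidef) (v : n → ℝ) :
    0 ≤ v ⬝ᵥ (M *ᵥ v) := by
  simpa using h.dotProduct_mulVec_nonneg v

lemma vecMulVec_mulVec' (a u : n → ℝ) : vecMulVec a a *ᵥ u = (a ⬝ᵥ u) • a := by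
  ext i
  simp [vecMulVec, mulVec, dotProduct, Finset.mul_sum, mul_comm, mul_left_comm]

lemma smul_inv_of {r : ℝ} (hr : r ≠ 0) {A B : Matrix n n ℝ} (h : A * B = 1) :
    (r • A)⁻¹ = r⁻¹ • B :=
  inv_eq_right_inv (by rw [smul_mul_smul_comm, mul_inv_cancel₀ hr, h, one_smul])

section
variable {c : ℝ} {D : Matrix n n ℝ}

lemma posDef_M (hc : 0 < c) (hD : D.PosDef) : (D + c • (1 : Matrix n n ℝ)).PosDef :=
  hD.add (posDef_smul_one hc)

lemma M_mulVec_inv (hc : 0 < c) (hD : D.PosDef) (z : n → ℝ) :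
    (D + c • (1 : Matrix n n ℝ)) *ᵥ ((D + c • (1 : Matrix n n ℝ))⁻¹ *ᵥ z) = z := by
  rw [mulVec_mulVec, mul_nonsing_inv _ (posDef_M hc hD).det_pos.ne'.isUnit, one_mulVec]

lemma inv_M_mulVec (hc : 0 < c) (hD : D.PosDef) (z : n → ℝ) :
    (D + c • (1 : Matrix n n ℝ))⁻¹ *ᵥ ((D + c • (1 : Matrix n n ℝ)) *ᵥ z) = z := by
  rw [mulVec_mulVec, nonsing_inv_mul _ (posDef_M hc hD).det_pos.ne'.isUnit, one_mulVec]

/-- Identity I2: `(1 + c⁻¹ D)⁻¹ = c (D + c 1)⁻¹`. -/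
lemma I2 (hc : 0 < c) (hD : D.PosDef) :
    ((1 : Matrix n n ℝ) + c⁻¹ • D)⁻¹ = c • (D + c • (1 : Matrix n n ℝ))⁻¹ := by
  have h1 : (1 : Matrix n n ℝ) + c⁻¹ • D = c⁻¹ • (D + c • (1 : Matrix n n ℝ)) := by
    rw [smul_add, smul_smul, inv_mul_cancel₀ hc.ne', one_smul, add_comm]
  rw [h1, smul_inv_of (inv_ne_zero hc.ne') (mul_nonsing_inv _ (posDef_M hc hD).det_pos.ne'.isUnit),
    inv_inv]

/-- Identity I1: `(D⁻¹ + c⁻¹ 1)⁻¹ = c (D + c 1)⁻¹ D`. -/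
lemma I1 (hc : 0 < c) (hD : D.PosDef) :
    (D⁻¹ + c⁻¹ • (1 : Matrix n n ℝ))⁻¹ = c • ((D + c • (1 : Matrix n n ℝ))⁻¹ * D) := by
  have hDdet := hD.det_pos.ne'.isUnit
  have hMdet := (posDef_M hc hD).det_pos.ne'.isUnit
  have h1 : D⁻¹ + c⁻¹ • (1 : Matrix n n ℝ)
      = c⁻¹ • (D⁻¹ * (D + c • (1 : Matrix n n ℝ))) := by
    rw [mul_add, nonsing_inv_mul _ hDdet, mul_smul_comm, mul_one, smul_add, smul_smul,
      inv_mul_cancel₀ hc.ne', one_smul, add_comm]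
  have h2 : (D⁻¹ * (D + c • (1 : Matrix n n ℝ)))
      * ((D + c • (1 : Matrix n n ℝ))⁻¹ * D) = 1 := by
    rw [mul_assoc, ← mul_assoc (D + c • (1 : Matrix n n ℝ)), mul_nonsing_inv _ hMdet, one_mul,
      nonsing_inv_mul _ hDdet]
  rw [h1, smul_inv_of (inv_ne_zero hc.ne') h2, inv_inv]

end

lemma PD_mulVec_inv {P : Matrix n n ℝ} (hP : P.PosDef) (z : n → ℝ) :
    P *ᵥ (P⁻¹ *ᵥ z) = z := by
  rw [mulVec_mulVec, mul_nonsing_inv _ hP.det_pos.ne'.isUnit, one_mulVec]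

lemma PD_inv_mulVec {P : Matrix n n ℝ} (hP : P.PosDef) (z : n → ℝ) :
    P⁻¹ *ᵥ (P *ᵥ z) = z := by
  rw [mulVec_mulVec, nonsing_inv_mul _ hP.det_pos.ne'.isUnit, one_mulVec]

/-- Monotonicity: adding a PSD matrix decreases the inverse quadratic form. -/
lemma quad_inv_add_le {P S : Matrix n n ℝ} (hP : P.PosDef) (hS : S.PosSemidef) (v : n → ℝ) :
    v ⬝ᵥ ((P + S)⁻¹ *ᵥ v) ≤ v ⬝ᵥ (P⁻¹ *ᵥ v) := by
  have hT : (P + S).PosDef := hP.add_posSemidef hS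
  set u := (P + S)⁻¹ *ᵥ v with hu
  have hv : P *ᵥ u + S *ᵥ u = v := by
    rw [← add_mulVec, hu, PD_mulVec_inv hT]
  have e1 : v ⬝ᵥ u = (P *ᵥ u) ⬝ᵥ u + (S *ᵥ u) ⬝ᵥ u := by
    rw [← hv, add_dotProduct]
  have e2 : v ⬝ᵥ (P⁻¹ *ᵥ v) = (P *ᵥ u) ⬝ᵥ u + u ⬝ᵥ (S *ᵥ u) + (S *ᵥ u) ⬝ᵥ u
      + (S *ᵥ u) ⬝ᵥ (P⁻¹ *ᵥ (S *ᵥ u)) := by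
    rw [← hv, mulVec_add, PD_inv_mulVec hP, add_dotProduct, dotProduct_add, dotProduct_add,
      sym_dot hP.isHermitian u (P⁻¹ *ᵥ (S *ᵥ u)), PD_mulVec_inv hP, dotProduct_comm (P *ᵥ u) u]
    ring
  rw [e1, e2]
  have n1 : 0 ≤ u ⬝ᵥ (S *ᵥ u) := quad_nonneg hS u
  have n2 : 0 ≤ (S *ᵥ u) ⬝ᵥ (P⁻¹ *ᵥ (S *ᵥ u)) := quad_nonneg hP.inv.posSemidef _
  linarith

/-- Completing the square. -/
lemma completing_sq {D : Matrix n n ℝ} (hD : D.PosDef) (e v : n → ℝ) :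
    e ⬝ᵥ v - (1/2) * (v ⬝ᵥ (D *ᵥ v)) ≤ (1/2) * (e ⬝ᵥ (D⁻¹ *ᵥ e)) := by
  have h0 : 0 ≤ (v - D⁻¹ *ᵥ e) ⬝ᵥ (D *ᵥ (v - D⁻¹ *ᵥ e)) := quad_nonneg hD.posSemidef _
  have h1 : (v - D⁻¹ *ᵥ e) ⬝ᵥ (D *ᵥ (v - D⁻¹ *ᵥ e))
      = v ⬝ᵥ (D *ᵥ v) - 2 * (e ⬝ᵥ v) + e ⬝ᵥ (D⁻¹ *ᵥ e) := by
    rw [mulVec_sub, PD_mulVec_inv hD, sub_dotProduct, dotProduct_sub, dotProduct_sub,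
      sym_dot hD.inv.isHermitian e (D *ᵥ v), PD_inv_mulVec hD,
      sym_dot hD.inv.isHermitian e e, dotProduct_comm v e]
    ring
  linarith [h1 ▸ h0]

section
variable {c : ℝ} {D : Matrix n n ℝ}

/-- Exact potential-drop identity:
`ẽᵀ(D⁻¹ + c⁻¹ I)ẽ = eᵀD⁻¹e − eᵀ(D+cI)⁻¹e` where `ẽ = (I + c⁻¹D)⁻¹ e`. -/
lemma drop_eq (hc : 0 < c) (hD : D.PosDef) (e : n → ℝ) :
    (((1 : Matrix n n ℝ) + c⁻¹ • D)⁻¹ *ᵥ e) ⬝ᵥ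
      ((D⁻¹ + c⁻¹ • (1 : Matrix n n ℝ)) *ᵥ (((1 : Matrix n n ℝ) + c⁻¹ • D)⁻¹ *ᵥ e))
    = e ⬝ᵥ (D⁻¹ *ᵥ e) - e ⬝ᵥ ((D + c • (1 : Matrix n n ℝ))⁻¹ *ᵥ e) := by
  have hM := posDef_M hc hD
  have hc0 : c ≠ 0 := hc.ne'
  set p : n → ℝ := (D + c • (1 : Matrix n n ℝ))⁻¹ *ᵥ e with hp
  have he : D *ᵥ p + c • p = e := by
    have := PD_mulVec_inv hM e
    rwa [add_mulVec, smul_mulVec, one_mulVec] at this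
  have hN : ((1 : Matrix n n ℝ) + c⁻¹ • D)⁻¹ *ᵥ e = c • p := by
    rw [I2 hc hD, smul_mulVec, hp]
  rw [hN]
  have hDi : D⁻¹ *ᵥ (D *ᵥ p) = p := PD_inv_mulVec hD p
  have h1 : (c • p) ⬝ᵥ ((D⁻¹ + c⁻¹ • (1 : Matrix n n ℝ)) *ᵥ (c • p))
      = c * c * (p ⬝ᵥ (D⁻¹ *ᵥ p)) + c * (p ⬝ᵥ p) := by
    simp only [add_mulVec, smul_mulVec, one_mulVec, mulVec_smul, dotProduct_add,
      smul_dotProduct, dotProduct_smul, smul_eq_mul]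
    field_simp
  have h2 : e ⬝ᵥ (D⁻¹ *ᵥ e) = (D *ᵥ p) ⬝ᵥ p + 2 * c * (p ⬝ᵥ p)
      + c * c * (p ⬝ᵥ (D⁻¹ *ᵥ p)) := by
    rw [← he]
    simp only [mulVec_add, mulVec_smul, hDi, add_dotProduct, dotProduct_add,
      dotProduct_smul, smul_dotProduct, smul_eq_mul]
    rw [sym_dot hD.isHermitian p (D⁻¹ *ᵥ p), PD_mulVec_inv hD]
    ring
  have h3 : e ⬝ᵥ ((D + c • (1 : Matrix n n ℝ))⁻¹ *ᵥ e) = (D *ᵥ p) ⬝ᵥ p + c * (p ⬝ᵥ p) := by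
    rw [← hp, ← he, add_dotProduct, smul_dotProduct, smul_eq_mul]
  rw [h1, h2, h3]
  ring

end

section
variable {c : ℝ} {D : Matrix n n ℝ}

/-- Key one-step inequality (infimal convolution of quadratics). -/
lemma key_step (hc : 0 < c) (hD : D.PosDef) (e v w : n → ℝ) :
    (1/2) * (w ⬝ᵥ ((D⁻¹ + c⁻¹ • (1 : Matrix n n ℝ))⁻¹ *ᵥ w))
      - (((1 : Matrix n n ℝ) + c⁻¹ • D)⁻¹ *ᵥ e) ⬝ᵥ w
    ≤ (1/2) * (v ⬝ᵥ (D *ᵥ v)) - e ⬝ᵥ v + (c/2) * ((w - v) ⬝ᵥ (w - v))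
      + (1/2) * (e ⬝ᵥ ((D + c • (1 : Matrix n n ℝ))⁻¹ *ᵥ e)) := by
  have hM := posDef_M hc hD
  have hr : ((D + c • (1 : Matrix n n ℝ))⁻¹).PosDef := hM.inv
  set r : Matrix n n ℝ := (D + c • (1 : Matrix n n ℝ))⁻¹ with hrdef
  set q : n → ℝ := v - r *ᵥ e - c • (r *ᵥ w) with hq
  have h0 : 0 ≤ q ⬝ᵥ ((D + c • (1 : Matrix n n ℝ)) *ᵥ q) := quad_nonneg hM.posSemidef q
  have hA1 : (D⁻¹ + c⁻¹ • (1 : Matrix n n ℝ))⁻¹ *ᵥ w = c • (r *ᵥ (D *ᵥ w)) := by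
    rw [I1 hc hD, smul_mulVec, ← mulVec_mulVec]
  have hN : ((1 : Matrix n n ℝ) + c⁻¹ • D)⁻¹ *ᵥ e = c • (r *ᵥ e) := by
    rw [I2 hc hD, smul_mulVec]
  have hMv : ∀ z : n → ℝ, r *ᵥ ((D + c • (1 : Matrix n n ℝ)) *ᵥ z) = z :=
    fun z => PD_inv_mulVec hM z
  have hC3 : w ⬝ᵥ (r *ᵥ (D *ᵥ w)) + c * (w ⬝ᵥ (r *ᵥ w)) = w ⬝ᵥ w := by
    rw [← smul_eq_mul, ← dotProduct_smul, ← dotProduct_add]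
    congr 1
    have := hMv w
    rwa [add_mulVec, smul_mulVec, one_mulVec, mulVec_add, mulVec_smul] at this
  have hMq : (D + c • (1 : Matrix n n ℝ)) *ᵥ q
      = (D + c • (1 : Matrix n n ℝ)) *ᵥ v - e - c • w := by
    rw [hq, mulVec_sub, mulVec_sub, mulVec_smul, PD_mulVec_inv hM, PD_mulVec_inv hM]
  have hvMv : v ⬝ᵥ ((D + c • (1 : Matrix n n ℝ)) *ᵥ v)
      = v ⬝ᵥ (D *ᵥ v) + c * (v ⬝ᵥ v) := by
    rw [add_mulVec, smul_mulVec, one_mulVec, dotProduct_add, dotProduct_smul, smul_eq_mul]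
  have hreMv : (r *ᵥ e) ⬝ᵥ ((D + c • (1 : Matrix n n ℝ)) *ᵥ v) = e ⬝ᵥ v := by
    rw [sym_dot hr.isHermitian e _, hMv v]
  have hrwMv : (r *ᵥ w) ⬝ᵥ ((D + c • (1 : Matrix n n ℝ)) *ᵥ v) = w ⬝ᵥ v := by
    rw [sym_dot hr.isHermitian w _, hMv v]
  have h0exp : q ⬝ᵥ ((D + c • (1 : Matrix n n ℝ)) *ᵥ q)
      = v ⬝ᵥ (D *ᵥ v) + c * (v ⬝ᵥ v) - 2 * (e ⬝ᵥ v) - 2 * c * (v ⬝ᵥ w)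
        + e ⬝ᵥ (r *ᵥ e) + 2 * c * (w ⬝ᵥ (r *ᵥ e)) + c * c * (w ⬝ᵥ (r *ᵥ w)) := by
    rw [hMq, hq]
    simp only [sub_dotProduct, dotProduct_sub, smul_dotProduct, dotProduct_smul, smul_eq_mul]
    rw [hvMv, hreMv, hrwMv, sym_dot hr.isHermitian e e, sym_dot hr.isHermitian e w,
      sym_dot hr.isHermitian w e, sym_dot hr.isHermitian w w,
      dotProduct_comm v e, dotProduct_comm w v, dotProduct_comm e (r *ᵥ w),
      dotProduct_comm w (r *ᵥ e)]
    ring_nf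
    rw [sym_dot hr.isHermitian w e, dotProduct_comm w (r *ᵥ e)]
    ring
  have hwv : (w - v) ⬝ᵥ (w - v) = w ⬝ᵥ w - 2 * (v ⬝ᵥ w) + v ⬝ᵥ v := by
    rw [sub_dotProduct, dotProduct_sub, dotProduct_sub, dotProduct_comm w v]
    ring
  rw [hA1, hN]
  rw [dotProduct_smul, smul_dotProduct, smul_eq_mul, smul_eq_mul,
    dotProduct_comm (r *ᵥ e) w]
  have hfin : (1 / 2 * (v ⬝ᵥ (D *ᵥ v)) - e ⬝ᵥ v + c / 2 * ((w - v) ⬝ᵥ (w - v))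
        + 1 / 2 * (e ⬝ᵥ (r *ᵥ e)))
      - (1 / 2 * (c * (w ⬝ᵥ (r *ᵥ (D *ᵥ w)))) - c * (w ⬝ᵥ (r *ᵥ e)))
      = (1 / 2) * (q ⬝ᵥ ((D + c • (1 : Matrix n n ℝ)) *ᵥ q)) := by
    rw [h0exp, hwv, ← hC3]
    ring
  linarith [h0, hfin]
end

end helpers


/-- `D_0 = (bc/(c-b)) I`, `D_k = (D_{k-1}⁻¹ + c⁻¹ I)⁻¹ + x_k x_kᵀ` for `k ≥ 1`. -/
def lasecD (d : ℕ) (b c : ℝ) (x : ℕ → Fin d → ℝ) : ℕ → Matrix (Fin d) (Fin d) ℝ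
  | 0 => (b * c / (c - b)) • (1 : Matrix (Fin d) (Fin d) ℝ)
  | k + 1 => ((lasecD d b c x k)⁻¹ + c⁻¹ • (1 : Matrix (Fin d) (Fin d) ℝ))⁻¹
      + vecMulVec (x (k + 1)) (x (k + 1))

/-- `e_0 = 0`, `e_k = (I + c⁻¹ D_{k-1})⁻¹ e_{k-1} + y_k x_k` for `k ≥ 1`. -/
def lasecE (d : ℕ) (b c : ℝ) (x : ℕ → Fin d → ℝ) (y : ℕ → ℝ) : ℕ → (Fin d → ℝ)
  | 0 => 0
  | k + 1 => ((1 : Matrix (Fin d) (Fin d) ℝ) + c⁻¹ • lasecD d b c x k)⁻¹ *ᵥ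
        lasecE d b c x y k + y (k + 1) • x (k + 1)

/-- The margin `p̂_k = x_kᵀ D_k⁻¹ (I + c⁻¹ D_{k-1})⁻¹ e_{k-1}`. -/
def lasecPhat (d : ℕ) (b c : ℝ) (x : ℕ → Fin d → ℝ) (y : ℕ → ℝ) (k : ℕ) : ℝ :=
  x k ⬝ᵥ ((lasecD d b c x k)⁻¹ *ᵥ
    (((1 : Matrix (Fin d) (Fin d) ℝ) + c⁻¹ • lasecD d b c x (k - 1))⁻¹ *ᵥ
      lasecE d b c x y (k - 1)))


section lasec
variable {d : ℕ} {b c : ℝ} {x : ℕ → Fin d → ℝ} {y : ℕ → ℝ}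

lemma lasecD_pd (hb : 0 < b) (hbc : b < c) : ∀ k, (lasecD d b c x k).PosDef := by
  have hc : 0 < c := hb.trans hbc
  intro k
  induction k with
  | zero =>
    rw [lasecD]
    exact posDef_smul_one (div_pos (mul_pos hb hc) (sub_pos.2 hbc))
  | succ k ih =>
    rw [lasecD]
    exact ((ih.inv.add (posDef_smul_one (inv_pos.2 hc))).inv).add_posSemidef
      (posSemidef_vecMulVec _)

lemma lasecD_one (hb : 0 < b) (hbc : b < c) :
    lasecD d b c x 1 = b • (1 : Matrix (Fin d) (Fin d) ℝ) + vecMulVec (x 1) (x 1) := by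
  have hc : 0 < c := hb.trans hbc
  have hcb : c - b ≠ 0 := sub_ne_zero.2 hbc.ne'
  have hs : b * c / (c - b) ≠ 0 := (div_pos (mul_pos hb hc) (sub_pos.2 hbc)).ne'
  rw [show (1 : ℕ) = 0 + 1 from rfl, lasecD, lasecD]
  congr 1
  rw [smul_inv_of hs (one_mul 1)]
  have h1 : (b * c / (c - b))⁻¹ • (1 : Matrix (Fin d) (Fin d) ℝ) + c⁻¹ • 1 = b⁻¹ • 1 := by
    rw [← add_smul]
    congr 1
    field_simp
    ring
  rw [h1, smul_inv_of (inv_ne_zero hb.ne') (one_mul 1), inv_inv]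

lemma lasecE_one : lasecE d b c x y 1 = y 1 • x 1 := by
  rw [show (1 : ℕ) = 0 + 1 from rfl, lasecE, lasecE]
  simp

end lasec

section lasec2
variable {d : ℕ} {b c : ℝ} {x : ℕ → Fin d → ℝ} {y : ℕ → ℝ}

lemma per_round (hb : 0 < b) (hbc : b < c) (j : ℕ)
    (hyj : y (j+1) = -1 ∨ y (j+1) = 1)
    (hmisj : y (j+1) * lasecPhat d b c x y (j+1) ≤ 0) :
    |lasecPhat d b c x y (j+1)| ≤
      1/2 * (lasecE d b c x y j ⬝ᵥ ((lasecD d b c x j)⁻¹ *ᵥ lasecE d b c x y j)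
        - lasecE d b c x y (j+1) ⬝ᵥ ((lasecD d b c x (j+1))⁻¹ *ᵥ lasecE d b c x y (j+1)))
      + 1/2 * (x (j+1) ⬝ᵥ ((lasecD d b c x (j+1))⁻¹ *ᵥ x (j+1)))
      - 1/2 * (lasecE d b c x y j ⬝ᵥ
          ((lasecD d b c x j + c • (1 : Matrix (Fin d) (Fin d) ℝ))⁻¹ *ᵥ lasecE d b c x y j)) := by
  have hc : 0 < c := hb.trans hbc
  have hpd := lasecD_pd (x := x) hb hbc
  set e' : Fin d → ℝ := ((1 : Matrix (Fin d) (Fin d) ℝ) + c⁻¹ • lasecD d b c x j)⁻¹ *ᵥ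
    lasecE d b c x y j with he'
  have hE1 : lasecE d b c x y (j+1) = e' + y (j+1) • x (j+1) := by rw [lasecE]
  have hPdef : lasecPhat d b c x y (j+1) = x (j+1) ⬝ᵥ ((lasecD d b c x (j+1))⁻¹ *ᵥ e') := by
    rw [lasecPhat, Nat.add_sub_cancel]
  have hy2 : y (j+1) * y (j+1) = 1 := by rcases hyj with h | h <;> rw [h] <;> norm_num
  have habs : |lasecPhat d b c x y (j+1)| = -(y (j+1) * lasecPhat d b c x y (j+1)) := by
    have h1 : |y (j+1)| = 1 := by rcases hyj with h | h <;> simp [h]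
    rw [← one_mul |lasecPhat d b c x y (j+1)|, ← h1, ← abs_mul, abs_of_nonpos hmisj]
  have hsym := (hpd (j+1)).inv.isHermitian
  have hexp : lasecE d b c x y (j+1) ⬝ᵥ ((lasecD d b c x (j+1))⁻¹ *ᵥ lasecE d b c x y (j+1))
      = e' ⬝ᵥ ((lasecD d b c x (j+1))⁻¹ *ᵥ e')
        + 2 * (y (j+1) * lasecPhat d b c x y (j+1))
        + x (j+1) ⬝ᵥ ((lasecD d b c x (j+1))⁻¹ *ᵥ x (j+1)) := by
    rw [hE1, hPdef]
    simp only [mulVec_add, mulVec_smul, dotProduct_add, add_dotProduct, dotProduct_smul,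
      smul_dotProduct, smul_eq_mul]
    rw [← sym_dot hsym e' (x (j+1)), dotProduct_comm ((lasecD d b c x (j+1))⁻¹ *ᵥ e') (x (j+1))]
    rw [mul_add, ← mul_assoc, hy2, one_mul]
    ring
  have hApd : (((lasecD d b c x j)⁻¹ + c⁻¹ • (1 : Matrix (Fin d) (Fin d) ℝ))).PosDef :=
    (hpd j).inv.add (posDef_smul_one (inv_pos.2 hc))
  have hstep1 : e' ⬝ᵥ ((lasecD d b c x (j+1))⁻¹ *ᵥ e')
      ≤ e' ⬝ᵥ (((((lasecD d b c x j)⁻¹ + c⁻¹ • (1 : Matrix (Fin d) (Fin d) ℝ))⁻¹))⁻¹ *ᵥ e') := by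
    conv_lhs => rw [show lasecD d b c x (j+1)
      = ((lasecD d b c x j)⁻¹ + c⁻¹ • (1 : Matrix (Fin d) (Fin d) ℝ))⁻¹
        + vecMulVec (x (j+1)) (x (j+1)) from by rw [lasecD]]
    exact quad_inv_add_le hApd.inv (posSemidef_vecMulVec _) e'
  have hstep2 : ((((lasecD d b c x j)⁻¹ + c⁻¹ • (1 : Matrix (Fin d) (Fin d) ℝ))⁻¹))⁻¹
      = (lasecD d b c x j)⁻¹ + c⁻¹ • (1 : Matrix (Fin d) (Fin d) ℝ) :=
    nonsing_inv_nonsing_inv _ hApd.det_pos.ne'.isUnit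
  have hstep3 := drop_eq hc (hpd j) (lasecE d b c x y j)
  rw [hstep2] at hstep1
  rw [← he'] at hstep3
  linarith [hstep1, hstep3, hexp, habs, hmisj]

end lasec2

section lasec3
variable {d : ℕ} {b c : ℝ} {x : ℕ → Fin d → ℝ} {y : ℕ → ℝ}

lemma comparator (hb : 0 < b) (hbc : b < c) :
    ∀ k, 1 ≤ k → ∀ u : ℕ → Fin d → ℝ,
    1/2 * (u k ⬝ᵥ (lasecD d b c x k *ᵥ u k)) - lasecE d b c x y k ⬝ᵥ u k
      - ∑ j ∈ range k, 1/2 * (lasecE d b c x y j ⬝ᵥ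
          ((lasecD d b c x j + c • (1 : Matrix (Fin d) (Fin d) ℝ))⁻¹ *ᵥ lasecE d b c x y j))
    ≤ b/2 * (u 1 ⬝ᵥ u 1)
      + c/2 * ∑ j ∈ Icc 2 k, ((u j - u (j-1)) ⬝ᵥ (u j - u (j-1)))
      + ∑ j ∈ Icc 1 k, (1/2 * (u j ⬝ᵥ x j)^2 - y j * (u j ⬝ᵥ x j)) := by
  have hc : 0 < c := hb.trans hbc
  have hpd := lasecD_pd (x := x) hb hbc
  intro k hk
  induction k, hk using Nat.le_induction with
  | base =>
    intro u
    rw [lasecD_one hb hbc, lasecE_one]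
    rw [Finset.sum_range_one, show lasecE d b c x y 0 = 0 from rfl,
      show Finset.Icc 2 1 = (∅ : Finset ℕ) from rfl, Finset.sum_empty, Finset.Icc_self,
      Finset.sum_singleton]
    simp only [add_mulVec, smul_mulVec, one_mulVec, vecMulVec_mulVec', dotProduct_add,
      dotProduct_smul, smul_dotProduct, smul_eq_mul, zero_dotProduct, dotProduct_zero,
      mulVec_zero, mul_zero, sub_zero]
    rw [dotProduct_comm (x 1) (u 1), sq]
    ring_nf
    exact le_refl _
  | succ k hk ih =>
    intro u
    have hKS := key_step hc (hpd k) (lasecE d b c x y k) (u k) (u (k+1))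
    have hDq : u (k+1) ⬝ᵥ (lasecD d b c x (k+1) *ᵥ u (k+1))
        = u (k+1) ⬝ᵥ (((lasecD d b c x k)⁻¹
            + c⁻¹ • (1 : Matrix (Fin d) (Fin d) ℝ))⁻¹ *ᵥ u (k+1))
          + (x (k+1) ⬝ᵥ u (k+1))^2 := by
      conv_lhs => rw [show lasecD d b c x (k+1) = ((lasecD d b c x k)⁻¹
        + c⁻¹ • (1 : Matrix (Fin d) (Fin d) ℝ))⁻¹ + vecMulVec (x (k+1)) (x (k+1)) from
          by rw [lasecD]]
      rw [add_mulVec, vecMulVec_mulVec', dotProduct_add, dotProduct_smul, smul_eq_mul,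
        dotProduct_comm (u (k+1)) (x (k+1)), sq]
    have hEq : lasecE d b c x y (k+1) ⬝ᵥ u (k+1)
        = (((1 : Matrix (Fin d) (Fin d) ℝ) + c⁻¹ • lasecD d b c x k)⁻¹
            *ᵥ lasecE d b c x y k) ⬝ᵥ u (k+1)
          + y (k+1) * (x (k+1) ⬝ᵥ u (k+1)) := by
      rw [lasecE, add_dotProduct, smul_dotProduct, smul_eq_mul, dotProduct_comm (x (k+1))]
    rw [Finset.sum_range_succ, Finset.sum_Icc_succ_top (show 2 ≤ k+1 by omega),
      Finset.sum_Icc_succ_top (show 1 ≤ k+1 by omega), Nat.add_sub_cancel,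
      dotProduct_comm (u (k+1)) (x (k+1))]
    linarith [ih u, hKS, hDq, hEq]

end lasec3

/-- if every round `k = 1,…,m` is a mistaken round
(`y_k ∈ {-1,+1}` and `y_k p̂_k ≤ 0`), then
`Σ|p̂_k| ≤ (b/2)‖u_1‖² + (c/2)V_m - Σ y_k u_kᵀx_k + (1/2)Σ(u_kᵀx_k)² + (1/2)Σ x_kᵀD_k⁻¹x_k`. -/
theorem lasec_margin_bound (d : ℕ) (hd : 1 ≤ d) (b c : ℝ) (hb : 0 < b) (hbc : b < c)
    (m : ℕ) (hm : 1 ≤ m) (x : ℕ → Fin d → ℝ) (y : ℕ → ℝ)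
    (hy : ∀ k ∈ Icc 1 m, y k = -1 ∨ y k = 1)
    (hmis : ∀ k ∈ Icc 1 m, y k * lasecPhat d b c x y k ≤ 0)
    (u : ℕ → Fin d → ℝ) :
    ∑ k ∈ Icc 1 m, |lasecPhat d b c x y k| ≤
      (b / 2) * (∑ i, (u 1 i) ^ 2)
      + (c / 2) * ∑ k ∈ Icc 2 m, ∑ i, (u k i - u (k - 1) i) ^ 2
      - ∑ k ∈ Icc 1 m, y k * (u k ⬝ᵥ x k)
      + (1 / 2) * ∑ k ∈ Icc 1 m, (u k ⬝ᵥ x k) ^ 2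
      + (1 / 2) * ∑ k ∈ Icc 1 m, x k ⬝ᵥ ((lasecD d b c x k)⁻¹ *ᵥ x k) := by
  have hc : 0 < c := hb.trans hbc
  have hpd := lasecD_pd (x := x) hb hbc
  have hconv : ∀ f : ℕ → ℝ, ∑ k ∈ Icc 1 m, f k = ∑ j ∈ range m, f (j+1) := by
    intro f
    rw [← Finset.Ico_add_one_right_eq_Icc, Finset.sum_Ico_eq_sum_range]
    simp [Nat.add_comm]
  -- potential / telescoping side
  have hstep : ∀ j ∈ range m, |lasecPhat d b c x y (j+1)| ≤
      (1/2 * (lasecE d b c x y j ⬝ᵥ ((lasecD d b c x j)⁻¹ *ᵥ lasecE d b c x y j))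
        - 1/2 * (lasecE d b c x y (j+1) ⬝ᵥ ((lasecD d b c x (j+1))⁻¹ *ᵥ lasecE d b c x y (j+1))))
      + (1/2 * (x (j+1) ⬝ᵥ ((lasecD d b c x (j+1))⁻¹ *ᵥ x (j+1)))
        - 1/2 * (lasecE d b c x y j ⬝ᵥ
            ((lasecD d b c x j + c • (1 : Matrix (Fin d) (Fin d) ℝ))⁻¹ *ᵥ lasecE d b c x y j))) := by
    intro j hj
    have hjm : j + 1 ∈ Icc 1 m := by
      simp only [Finset.mem_range] at hj
      simp only [Finset.mem_Icc]
      omega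
    have := per_round hb hbc j (hy _ hjm) (hmis _ hjm)
    linarith
  have h1 : ∑ k ∈ Icc 1 m, |lasecPhat d b c x y k|
      ≤ (1/2 * (lasecE d b c x y 0 ⬝ᵥ ((lasecD d b c x 0)⁻¹ *ᵥ lasecE d b c x y 0))
          - 1/2 * (lasecE d b c x y m ⬝ᵥ ((lasecD d b c x m)⁻¹ *ᵥ lasecE d b c x y m)))
        + (∑ j ∈ range m, (1/2 * (x (j+1) ⬝ᵥ ((lasecD d b c x (j+1))⁻¹ *ᵥ x (j+1)))
            - 1/2 * (lasecE d b c x y j ⬝ᵥ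
              ((lasecD d b c x j + c • (1 : Matrix (Fin d) (Fin d) ℝ))⁻¹ *ᵥ lasecE d b c x y j)))) := by
    rw [hconv (fun k => |lasecPhat d b c x y k|)]
    calc ∑ j ∈ range m, |lasecPhat d b c x y (j+1)|
        ≤ ∑ j ∈ range m, ((1/2 * (lasecE d b c x y j ⬝ᵥ ((lasecD d b c x j)⁻¹ *ᵥ lasecE d b c x y j))
            - 1/2 * (lasecE d b c x y (j+1) ⬝ᵥ ((lasecD d b c x (j+1))⁻¹ *ᵥ lasecE d b c x y (j+1))))
          + (1/2 * (x (j+1) ⬝ᵥ ((lasecD d b c x (j+1))⁻¹ *ᵥ x (j+1)))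
            - 1/2 * (lasecE d b c x y j ⬝ᵥ
              ((lasecD d b c x j + c • (1 : Matrix (Fin d) (Fin d) ℝ))⁻¹ *ᵥ lasecE d b c x y j)))) :=
          Finset.sum_le_sum hstep
      _ = _ := by
          rw [Finset.sum_add_distrib, Finset.sum_range_sub' (fun j =>
            1/2 * (lasecE d b c x y j ⬝ᵥ ((lasecD d b c x j)⁻¹ *ᵥ lasecE d b c x y j)))]
  have hE0 : lasecE d b c x y 0 ⬝ᵥ ((lasecD d b c x 0)⁻¹ *ᵥ lasecE d b c x y 0) = 0 := by
    rw [show lasecE d b c x y 0 = 0 from rfl, zero_dotProduct]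
  -- comparator side
  have h2 := comparator (x := x) (y := y) hb hbc m hm u
  have h3 := completing_sq (hpd m) (lasecE d b c x y m) (u m)
  -- sum format conversions
  have c1 : u 1 ⬝ᵥ u 1 = ∑ i, (u 1 i) ^ 2 := by
    simp [dotProduct, sq]
  have c2 : ∑ j ∈ Icc 2 m, ((u j - u (j-1)) ⬝ᵥ (u j - u (j-1)))
      = ∑ k ∈ Icc 2 m, ∑ i, (u k i - u (k - 1) i) ^ 2 := by
    refine Finset.sum_congr rfl fun j _ => ?_
    simp [dotProduct, sq]
  have c3 : ∑ j ∈ Icc 1 m, (1/2 * (u j ⬝ᵥ x j)^2 - y j * (u j ⬝ᵥ x j))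
      = 1/2 * ∑ k ∈ Icc 1 m, (u k ⬝ᵥ x k) ^ 2 - ∑ k ∈ Icc 1 m, y k * (u k ⬝ᵥ x k) := by
    rw [Finset.sum_sub_distrib, Finset.mul_sum]
  have c4 : ∑ j ∈ range m, 1/2 * (x (j+1) ⬝ᵥ ((lasecD d b c x (j+1))⁻¹ *ᵥ x (j+1)))
      = 1/2 * ∑ k ∈ Icc 1 m, x k ⬝ᵥ ((lasecD d b c x k)⁻¹ *ᵥ x k) := by
    rw [Finset.mul_sum]
    exact (hconv (fun k => 1/2 * (x k ⬝ᵥ ((lasecD d b c x k)⁻¹ *ᵥ x k)))).symm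
  rw [Finset.sum_sub_distrib] at h1
  rw [← c1, ← c2] at *
  linarith [h1, h2, h3, c3, c4, hE0]

end
end

section
/- (Inequality (a2).) Suppose y_k ∈ {−1, +1} and y_k p̂_k ≤ 0 for every k = 1, …, m. Then for every a > 0, γ > 0 and every sequence u_1, …, u_m ∈ ℝ^d: Σ_{k=1}^{m} (|p̂_k| + a) ≤ (a/γ) Σ_{k=1}^{m} ℓ_{γ,k}(u_k) + (a²/(2γ²)) (b‖u_1‖² + c V_m + Σ_{k=1}^{m} (u_kᵀ x_k)²) + (1/2) Σ_{k=1}^{m} x_kᵀ D_k^{−1} x_k. -/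
set_option autoImplicit false
set_option maxHeartbeats 1000000

open Matrix Finset

noncomputable section

/-- The hinge loss `ℓ_{γ,k}(u) = max{0, γ - y_k uᵀ x_k}`. -/
def hinge (d : ℕ) (x : ℕ → Fin d → ℝ) (y : ℕ → ℝ) (γ : ℝ) (k : ℕ) (u : Fin d → ℝ) : ℝ :=
  max 0 (γ - y k * (u ⬝ᵥ x k))

namespace LasecAux

variable {d : ℕ}

lemma dot_symm (A : Matrix (Fin d) (Fin d) ℝ) (hA : A.IsHermitian) (u w : Fin d → ℝ) :
    (A *ᵥ u) ⬝ᵥ w = u ⬝ᵥ (A *ᵥ w) := by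
  rw [dotProduct_comm, Matrix.dotProduct_mulVec, ← Matrix.mulVec_transpose,
    show Aᵀ = A from hA, dotProduct_comm]

lemma vecMulVec_mulVec' (x z : Fin d → ℝ) : vecMulVec x x *ᵥ z = (x ⬝ᵥ z) • x := by
  funext i
  simp only [vecMulVec_apply, mulVec, dotProduct, Pi.smul_apply, smul_eq_mul, Finset.sum_mul]
  exact Finset.sum_congr rfl fun j _ => by ring

lemma vecMulVec_posSemidef (x : Fin d → ℝ) : (vecMulVec x x).PosSemidef := by
  refine posSemidef_iff_dotProduct_mulVec.mpr ⟨?_, ?_⟩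
  · ext i j
    simp [vecMulVec_apply, mul_comm]
  · intro z
    simp only [star_trivial, vecMulVec_mulVec', dotProduct_smul, smul_eq_mul]
    rw [dotProduct_comm]
    exact mul_self_nonneg _

lemma smul_one_posDef {r : ℝ} (hr : 0 < r) : ((r • 1 : Matrix (Fin d) (Fin d) ℝ)).PosDef := by
  refine posDef_iff_dotProduct_mulVec.mpr ⟨?_, ?_⟩
  · ext i j
    simp only [conjTranspose_apply, Matrix.smul_apply, Matrix.one_apply, smul_eq_mul, star_trivial]
    by_cases h : i = j <;> simp [h, Matrix.one_apply, eq_comm]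
  · intro z hz
    simp only [star_trivial, smul_mulVec, one_mulVec, dotProduct_smul, smul_eq_mul]
    have hzz : 0 < z ⬝ᵥ z :=
      lt_of_le_of_ne (Finset.sum_nonneg fun j _ => mul_self_nonneg (z j))
        (fun h => hz (dotProduct_self_eq_zero.mp h.symm))
    exact mul_pos hr hzz

lemma quad_inv_lower {M : Matrix (Fin d) (Fin d) ℝ} (hM : M.PosDef) (z w : Fin d → ℝ) :
    2*(z ⬝ᵥ w) - w ⬝ᵥ (M *ᵥ w) ≤ z ⬝ᵥ (M⁻¹ *ᵥ z) := by
  have hMM : M *ᵥ (M⁻¹ *ᵥ z) = z := by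
    rw [mulVec_mulVec, Matrix.mul_nonsing_inv _ hM.det_pos.ne'.isUnit, one_mulVec]
  have h0 : 0 ≤ (M⁻¹ *ᵥ z - w) ⬝ᵥ (M *ᵥ (M⁻¹ *ᵥ z - w)) := by
    simpa using hM.posSemidef.dotProduct_mulVec_nonneg (M⁻¹ *ᵥ z - w)
  have hsym : (M *ᵥ (M⁻¹ *ᵥ z)) ⬝ᵥ w = (M⁻¹ *ᵥ z) ⬝ᵥ (M *ᵥ w) := dot_symm M hM.1 _ _
  rw [hMM] at hsym
  have hexp : (M⁻¹ *ᵥ z - w) ⬝ᵥ (M *ᵥ (M⁻¹ *ᵥ z - w))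
      = z ⬝ᵥ (M⁻¹ *ᵥ z) - 2*(z ⬝ᵥ w) + w ⬝ᵥ (M *ᵥ w) := by
    rw [Matrix.mulVec_sub, hMM, dotProduct_sub, sub_dotProduct, sub_dotProduct,
      dotProduct_comm (M⁻¹ *ᵥ z) z, ← hsym, dotProduct_comm w z]
    ring
  linarith [hexp ▸ h0]

section Ident
variable {D : Matrix (Fin d) (Fin d) ℝ} {c : ℝ} (hD : D.PosDef) (hc : 0 < c)
include hD hc

lemma M_posDef : ((c • 1 + D : Matrix (Fin d) (Fin d) ℝ)).PosDef :=
  (smul_one_posDef hc).add hD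

lemma MB_eq_one : (c • 1 + D : Matrix (Fin d) (Fin d) ℝ) * (c • 1 + D)⁻¹ = 1 :=
  Matrix.mul_nonsing_inv _ (M_posDef hD hc).det_pos.ne'.isUnit

lemma BM_eq_one : (c • 1 + D : Matrix (Fin d) (Fin d) ℝ)⁻¹ * (c • 1 + D) = 1 :=
  Matrix.nonsing_inv_mul _ (M_posDef hD hc).det_pos.ne'.isUnit

lemma inv_one_add_smul : ((1 : Matrix (Fin d) (Fin d) ℝ) + c⁻¹ • D)⁻¹ = c • (c • 1 + D)⁻¹ := by
  apply Matrix.inv_eq_right_inv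
  rw [add_mul, one_mul, Matrix.smul_mul, Matrix.mul_smul, smul_smul, inv_mul_cancel₀ hc.ne',
    one_smul]
  have : c • (c • 1 + D)⁻¹ + D * (c • 1 + D)⁻¹ = (c • 1 + D) * (c • 1 + D)⁻¹ := by
    rw [Matrix.add_mul, Matrix.smul_mul, one_mul]
  rw [this, MB_eq_one hD hc]

lemma inv_Dinv_add : (D⁻¹ + c⁻¹ • (1 : Matrix (Fin d) (Fin d) ℝ))⁻¹ = c • (D * (c • 1 + D)⁻¹) := by
  apply Matrix.inv_eq_right_inv
  rw [Matrix.add_mul, Matrix.mul_smul, Matrix.mul_smul, ← Matrix.mul_assoc,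
    Matrix.nonsing_inv_mul _ hD.det_pos.ne'.isUnit, one_mul, Matrix.smul_mul, one_mul,
    smul_smul, mul_inv_cancel₀ hc.ne', one_smul]
  have : c • (c • 1 + D)⁻¹ + D * (c • 1 + D)⁻¹ = (c • 1 + D) * (c • 1 + D)⁻¹ := by
    rw [Matrix.add_mul, Matrix.smul_mul, one_mul]
  rw [this, MB_eq_one hD hc]

lemma Dinv_add_posDef : (D⁻¹ + c⁻¹ • (1 : Matrix (Fin d) (Fin d) ℝ)).PosDef :=
  hD.inv.add (smul_one_posDef (by positivity))

lemma F_posDef : ((D⁻¹ + c⁻¹ • (1 : Matrix (Fin d) (Fin d) ℝ))⁻¹).PosDef :=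
  (Dinv_add_posDef hD hc).inv

lemma F_inv_inv : (D⁻¹ + c⁻¹ • (1 : Matrix (Fin d) (Fin d) ℝ))⁻¹⁻¹
    = D⁻¹ + c⁻¹ • (1 : Matrix (Fin d) (Fin d) ℝ) :=
  Matrix.nonsing_inv_nonsing_inv _ (Dinv_add_posDef hD hc).det_pos.ne'.isUnit

lemma shift_lemma (e v w : Fin d → ℝ) :
    (1/2)*((((1 : Matrix (Fin d) (Fin d) ℝ) + c⁻¹ • D)⁻¹ *ᵥ e) ⬝ᵥ
        ((D⁻¹ + c⁻¹ • (1 : Matrix (Fin d) (Fin d) ℝ))⁻¹⁻¹ *ᵥ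
          (((1 : Matrix (Fin d) (Fin d) ℝ) + c⁻¹ • D)⁻¹ *ᵥ e)))
      - v ⬝ᵥ (((1 : Matrix (Fin d) (Fin d) ℝ) + c⁻¹ • D)⁻¹ *ᵥ e)
      + (1/2)*(v ⬝ᵥ ((D⁻¹ + c⁻¹ • (1 : Matrix (Fin d) (Fin d) ℝ))⁻¹ *ᵥ v))
    ≤ (1/2)*(e ⬝ᵥ (D⁻¹ *ᵥ e)) - w ⬝ᵥ e + (1/2)*(w ⬝ᵥ (D *ᵥ w))
      + (c/2)*((v - w) ⬝ᵥ (v - w)) := by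
  have hdet : IsUnit D.det := hD.det_pos.ne'.isUnit
  have hMdet : IsUnit (c • 1 + D : Matrix (Fin d) (Fin d) ℝ).det :=
    (M_posDef hD hc).det_pos.ne'.isUnit
  set M : Matrix (Fin d) (Fin d) ℝ := c • 1 + D with hMdef
  set B : Matrix (Fin d) (Fin d) ℝ := M⁻¹ with hBdef
  set s : Fin d → ℝ := B *ᵥ e with hs
  set t : Fin d → ℝ := B *ᵥ v with ht
  have hMs : M *ᵥ s = e := by
    rw [hs, mulVec_mulVec, Matrix.mul_nonsing_inv _ hMdet, one_mulVec]
  have hMt : M *ᵥ t = v := by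
    rw [ht, mulVec_mulVec, Matrix.mul_nonsing_inv _ hMdet, one_mulVec]
  have hBe : ((1 : Matrix (Fin d) (Fin d) ℝ) + c⁻¹ • D)⁻¹ *ᵥ e = c • s := by
    rw [inv_one_add_smul hD hc, Matrix.smul_mulVec, ← hBdef, ← hs]
  have hFv : (D⁻¹ + c⁻¹ • (1 : Matrix (Fin d) (Fin d) ℝ))⁻¹ *ᵥ v = c • (D *ᵥ t) := by
    rw [inv_Dinv_add hD hc, Matrix.smul_mulVec, ← mulVec_mulVec, ← hBdef, ← ht]
  have hDiD : ∀ z : Fin d → ℝ, D⁻¹ *ᵥ (D *ᵥ z) = z := by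
    intro z; rw [mulVec_mulVec, Matrix.nonsing_inv_mul _ hdet, one_mulVec]
  have hDDi : ∀ z : Fin d → ℝ, D *ᵥ (D⁻¹ *ᵥ z) = z := by
    intro z; rw [mulVec_mulVec, Matrix.mul_nonsing_inv _ hdet, one_mulVec]
  have hMz : ∀ z : Fin d → ℝ, M *ᵥ z = c • z + D *ᵥ z := by
    intro z; rw [hMdef, Matrix.add_mulVec, Matrix.smul_mulVec, Matrix.one_mulVec]
  rw [F_inv_inv hD hc, hBe, hFv, ← hMs, ← hMt, hMz s, hMz t]
  set r : Fin d → ℝ := w - s - c • t with hr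
  have h1 : 0 ≤ r ⬝ᵥ r :=
    Finset.sum_nonneg fun j _ => mul_self_nonneg (r j)
  have h2 : 0 ≤ r ⬝ᵥ (D *ᵥ r) := by simpa using hD.posSemidef.dotProduct_mulVec_nonneg r
  have hds := dot_symm D hD.1
  have hdsi := dot_symm D⁻¹ (Matrix.PosDef.inv hD).1
  have f1 : t ⬝ᵥ (D *ᵥ s) = s ⬝ᵥ (D *ᵥ t) := by rw [dotProduct_comm, hds]
  have f2 : w ⬝ᵥ (D *ᵥ s) = s ⬝ᵥ (D *ᵥ w) := by rw [dotProduct_comm, hds]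
  have f3 : w ⬝ᵥ (D *ᵥ t) = t ⬝ᵥ (D *ᵥ w) := by rw [dotProduct_comm, hds]
  simp only [hr, Matrix.mulVec_add, Matrix.mulVec_smul, Matrix.mulVec_sub, dotProduct_add,
    add_dotProduct, dotProduct_smul, smul_dotProduct, smul_eq_mul, dotProduct_sub,
    sub_dotProduct, Matrix.add_mulVec, Matrix.smul_mulVec, Matrix.one_mulVec,
    hDiD, hDDi, hds, hdsi, smul_smul, inv_mul_cancel₀ hc.ne', one_smul,
    f1, f2, f3, dotProduct_comm w s, dotProduct_comm w t, dotProduct_comm t s] at h1 h2 ⊢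
  ring_nf at h1 h2 ⊢
  have hcc : c ^ 2 * (s ⬝ᵥ s) * c⁻¹ = c * (s ⬝ᵥ s) := by
    field_simp
  linarith [mul_nonneg hc.le h1, h2, hcc]

end Ident

lemma core_lemma {F : Matrix (Fin d) (Fin d) ℝ} (hF : F.PosDef) (x et v : Fin d → ℝ)
    {yk : ℝ} (hy : yk ^ 2 = 1) :
    (1/2)*((et + yk • x) ⬝ᵥ ((F + vecMulVec x x)⁻¹ *ᵥ (et + yk • x)))
      - v ⬝ᵥ (et + yk • x) + (1/2)*(v ⬝ᵥ ((F + vecMulVec x x) *ᵥ v))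
    ≤ (1/2)*(et ⬝ᵥ (F⁻¹ *ᵥ et)) - v ⬝ᵥ et + (1/2)*(v ⬝ᵥ (F *ᵥ v))
      + yk * (x ⬝ᵥ ((F + vecMulVec x x)⁻¹ *ᵥ et)) + (1/2)*(x ⬝ᵥ ((F + vecMulVec x x)⁻¹ *ᵥ x))
      - yk * (v ⬝ᵥ x) + (1/2)*(v ⬝ᵥ x)^2 := by
  set Dn : Matrix (Fin d) (Fin d) ℝ := F + vecMulVec x x with hDn
  have hDnpos : Dn.PosDef := hF.add_posSemidef (vecMulVec_posSemidef x)
  have hDninv : Dn⁻¹.PosDef := hDnpos.inv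
  have hsym := dot_symm Dn⁻¹ hDninv.1
  set w0 : Fin d → ℝ := Dn⁻¹ *ᵥ et with hw0
  have hDnw0 : Dn *ᵥ w0 = et := by
    rw [hw0, mulVec_mulVec, Matrix.mul_nonsing_inv _ hDnpos.det_pos.ne'.isUnit, one_mulVec]
  have hmono : et ⬝ᵥ (Dn⁻¹ *ᵥ et) ≤ et ⬝ᵥ (F⁻¹ *ᵥ et) := by
    have h1 : 2*(et ⬝ᵥ w0) - w0 ⬝ᵥ (F *ᵥ w0) ≤ et ⬝ᵥ (F⁻¹ *ᵥ et) := quad_inv_lower hF et w0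
    have h2 : w0 ⬝ᵥ (Dn *ᵥ w0) = w0 ⬝ᵥ (F *ᵥ w0) + (x ⬝ᵥ w0)^2 := by
      rw [hDn, Matrix.add_mulVec, dotProduct_add, vecMulVec_mulVec', dotProduct_smul,
        smul_eq_mul, dotProduct_comm w0 x, sq]
    have h3 : w0 ⬝ᵥ (Dn *ᵥ w0) = et ⬝ᵥ w0 := by
      rw [hDnw0, dotProduct_comm]
    have h4 : et ⬝ᵥ (Dn⁻¹ *ᵥ et) = et ⬝ᵥ w0 := by rw [hw0]
    nlinarith [sq_nonneg (x ⬝ᵥ w0)]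
  have he1 : (et + yk • x) ⬝ᵥ (Dn⁻¹ *ᵥ (et + yk • x))
      = et ⬝ᵥ (Dn⁻¹ *ᵥ et) + 2*yk*(x ⬝ᵥ (Dn⁻¹ *ᵥ et)) + (x ⬝ᵥ (Dn⁻¹ *ᵥ x)) := by
    have hx : x ⬝ᵥ (Dn⁻¹ *ᵥ et) = et ⬝ᵥ (Dn⁻¹ *ᵥ x) := by
      rw [← hsym, dotProduct_comm]
    simp only [Matrix.mulVec_add, Matrix.mulVec_smul, dotProduct_add, add_dotProduct,
      dotProduct_smul, smul_dotProduct, smul_eq_mul]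
    rw [← hx]
    have : yk * (yk * (x ⬝ᵥ (Dn⁻¹ *ᵥ x))) = (x ⬝ᵥ (Dn⁻¹ *ᵥ x)) := by
      rw [← mul_assoc, ← sq, hy, one_mul]
    nlinarith [this]
  have he2 : v ⬝ᵥ (et + yk • x) = v ⬝ᵥ et + yk * (v ⬝ᵥ x) := by
    simp [dotProduct_add, dotProduct_smul]
  have he3 : v ⬝ᵥ (Dn *ᵥ v) = v ⬝ᵥ (F *ᵥ v) + (v ⬝ᵥ x)^2 := by
    rw [hDn, Matrix.add_mulVec, dotProduct_add, vecMulVec_mulVec', dotProduct_smul,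
      smul_eq_mul, dotProduct_comm x v, ← sq, sq (v ⬝ᵥ x)]
  rw [he1, he2, he3]
  linarith [hmono]

section Lasec

variable {b c : ℝ} (hb : 0 < b) (hbc : b < c) (x : ℕ → Fin d → ℝ) (y : ℕ → ℝ)

lemma lasecD_posDef (hb : 0 < b) (hbc : b < c) : ∀ k, (lasecD d b c x k).PosDef := by
  intro k
  induction k with
  | zero =>
    have : 0 < b * c / (c - b) := by
      have hc : 0 < c := hb.trans hbc
      have : 0 < c - b := by linarith
      positivity
    exact smul_one_posDef this
  | succ k ih =>
    have hc : 0 < c := hb.trans hbc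
    exact (F_posDef ih hc).add_posSemidef (vecMulVec_posSemidef _)

include hb hbc

lemma lasec_step (k : ℕ) (hy2 : (y (k+1))^2 = 1) (v w : Fin d → ℝ) :
    (1/2)*(lasecE d b c x y (k+1) ⬝ᵥ ((lasecD d b c x (k+1))⁻¹ *ᵥ lasecE d b c x y (k+1)))
      - v ⬝ᵥ lasecE d b c x y (k+1) + (1/2)*(v ⬝ᵥ (lasecD d b c x (k+1) *ᵥ v))
    ≤ (1/2)*(lasecE d b c x y k ⬝ᵥ ((lasecD d b c x k)⁻¹ *ᵥ lasecE d b c x y k))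
      - w ⬝ᵥ lasecE d b c x y k + (1/2)*(w ⬝ᵥ (lasecD d b c x k *ᵥ w))
      + y (k+1) * lasecPhat d b c x y (k+1)
      + (1/2)*(x (k+1) ⬝ᵥ ((lasecD d b c x (k+1))⁻¹ *ᵥ x (k+1)))
      - y (k+1) * (v ⬝ᵥ x (k+1)) + (1/2)*(v ⬝ᵥ x (k+1))^2
      + (c/2)*((v - w) ⬝ᵥ (v - w)) := by
  have hc : 0 < c := hb.trans hbc
  have hD : (lasecD d b c x k).PosDef := lasecD_posDef x hb hbc k
  have hF : (((lasecD d b c x k)⁻¹ + c⁻¹ • (1 : Matrix (Fin d) (Fin d) ℝ))⁻¹).PosDef :=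
    F_posDef hD hc
  have h1 := core_lemma hF (x (k+1))
    (((1 : Matrix (Fin d) (Fin d) ℝ) + c⁻¹ • lasecD d b c x k)⁻¹ *ᵥ lasecE d b c x y k) v hy2
  have h2 := shift_lemma hD hc (lasecE d b c x y k) v w
  have hE : lasecE d b c x y (k+1)
      = ((1 : Matrix (Fin d) (Fin d) ℝ) + c⁻¹ • lasecD d b c x k)⁻¹ *ᵥ lasecE d b c x y k
        + y (k+1) • x (k+1) := rfl
  have hDk : lasecD d b c x (k+1)
      = ((lasecD d b c x k)⁻¹ + c⁻¹ • (1 : Matrix (Fin d) (Fin d) ℝ))⁻¹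
        + vecMulVec (x (k+1)) (x (k+1)) := rfl
  have hP : lasecPhat d b c x y (k+1)
      = x (k+1) ⬝ᵥ ((lasecD d b c x (k+1))⁻¹ *ᵥ
          (((1 : Matrix (Fin d) (Fin d) ℝ) + c⁻¹ • lasecD d b c x k)⁻¹ *ᵥ
            lasecE d b c x y k)) := rfl
  rw [hE, hDk, hP, hDk]
  linarith [h1, h2]

lemma lasec_start (hy2 : (y 1)^2 = 1) (v : Fin d → ℝ) :
    (1/2)*(lasecE d b c x y 1 ⬝ᵥ ((lasecD d b c x 1)⁻¹ *ᵥ lasecE d b c x y 1))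
      - v ⬝ᵥ lasecE d b c x y 1 + (1/2)*(v ⬝ᵥ (lasecD d b c x 1 *ᵥ v))
    ≤ (b/2)*(v ⬝ᵥ v)
      + y 1 * lasecPhat d b c x y 1
      + (1/2)*(x 1 ⬝ᵥ ((lasecD d b c x 1)⁻¹ *ᵥ x 1))
      - y 1 * (v ⬝ᵥ x 1) + (1/2)*(v ⬝ᵥ x 1)^2 := by
  have hc : 0 < c := hb.trans hbc
  have hD : (lasecD d b c x 0).PosDef := lasecD_posDef x hb hbc 0
  have hF : (((lasecD d b c x 0)⁻¹ + c⁻¹ • (1 : Matrix (Fin d) (Fin d) ℝ))⁻¹).PosDef :=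
    F_posDef hD hc
  have h1 := core_lemma hF (x 1)
    (((1 : Matrix (Fin d) (Fin d) ℝ) + c⁻¹ • lasecD d b c x 0)⁻¹ *ᵥ lasecE d b c x y 0) v hy2
  have hE0 : lasecE d b c x y 0 = 0 := rfl
  have het : ((1 : Matrix (Fin d) (Fin d) ℝ) + c⁻¹ • lasecD d b c x 0)⁻¹ *ᵥ lasecE d b c x y 0
      = 0 := by rw [hE0, Matrix.mulVec_zero]
  -- F₀ = b • 1
  have hD0 : lasecD d b c x 0 = (b * c / (c - b)) • (1 : Matrix (Fin d) (Fin d) ℝ) := rfl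
  have hcb : c - b ≠ 0 := by intro h; linarith
  have hD0inv : (lasecD d b c x 0)⁻¹ = ((c - b) / (b * c)) • (1 : Matrix (Fin d) (Fin d) ℝ) := by
    rw [hD0]
    apply Matrix.inv_eq_right_inv
    rw [Matrix.smul_mul, Matrix.mul_smul, smul_smul, one_mul]
    rw [show b * c / (c - b) * ((c - b) / (b * c)) = 1 by field_simp]
    rw [one_smul]
  have hF0 : ((lasecD d b c x 0)⁻¹ + c⁻¹ • (1 : Matrix (Fin d) (Fin d) ℝ))⁻¹
      = b • (1 : Matrix (Fin d) (Fin d) ℝ) := by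
    rw [hD0inv, ← add_smul]
    rw [show (c - b) / (b * c) + c⁻¹ = b⁻¹ by field_simp; ring]
    apply Matrix.inv_eq_right_inv
    rw [Matrix.smul_mul, Matrix.mul_smul, smul_smul, one_mul, inv_mul_cancel₀ hb.ne', one_smul]
  have hE : lasecE d b c x y 1
      = ((1 : Matrix (Fin d) (Fin d) ℝ) + c⁻¹ • lasecD d b c x 0)⁻¹ *ᵥ lasecE d b c x y 0
        + y 1 • x 1 := rfl
  have hDk : lasecD d b c x 1
      = ((lasecD d b c x 0)⁻¹ + c⁻¹ • (1 : Matrix (Fin d) (Fin d) ℝ))⁻¹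
        + vecMulVec (x 1) (x 1) := rfl
  have hP : lasecPhat d b c x y 1
      = x 1 ⬝ᵥ ((lasecD d b c x 1)⁻¹ *ᵥ
          (((1 : Matrix (Fin d) (Fin d) ℝ) + c⁻¹ • lasecD d b c x 0)⁻¹ *ᵥ
            lasecE d b c x y 0)) := rfl
  rw [hE, hDk, hP, hDk]
  rw [het] at h1 ⊢
  have hz1 : (0 : Fin d → ℝ) ⬝ᵥ ((((lasecD d b c x 0)⁻¹
      + c⁻¹ • (1 : Matrix (Fin d) (Fin d) ℝ))⁻¹)⁻¹ *ᵥ 0) = 0 := by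
    simp
  have hz2 : v ⬝ᵥ (0 : Fin d → ℝ) = 0 := by simp
  have hFv : v ⬝ᵥ (((lasecD d b c x 0)⁻¹ + c⁻¹ • (1 : Matrix (Fin d) (Fin d) ℝ))⁻¹ *ᵥ v)
      = b * (v ⬝ᵥ v) := by
    rw [hF0, Matrix.smul_mulVec, Matrix.one_mulVec, dotProduct_smul, smul_eq_mul]
  rw [hz1, hz2, hFv] at h1
  linarith [h1]

-- continuing inside namespace LasecAux, section Lasec (hb hbc x y in scope)

def Gfun (d : ℕ) (b c : ℝ) (x : ℕ → Fin d → ℝ) (y : ℕ → ℝ) (k : ℕ) (vv : Fin d → ℝ) : ℝ :=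
  (1/2)*(lasecE d b c x y k ⬝ᵥ ((lasecD d b c x k)⁻¹ *ᵥ lasecE d b c x y k))
    - vv ⬝ᵥ lasecE d b c x y k + (1/2)*(vv ⬝ᵥ (lasecD d b c x k *ᵥ vv))

def Tfun (d : ℕ) (b c : ℝ) (x : ℕ → Fin d → ℝ) (y : ℕ → ℝ) (v : ℕ → Fin d → ℝ) (k : ℕ) : ℝ :=
  y k * lasecPhat d b c x y k + (1/2)*(x k ⬝ᵥ ((lasecD d b c x k)⁻¹ *ᵥ x k))
    - y k * (v k ⬝ᵥ x k) + (1/2)*(v k ⬝ᵥ x k)^2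

lemma lasec_tele (v : ℕ → Fin d → ℝ) (m : ℕ) (hy2 : ∀ k ∈ Icc 1 m, (y k)^2 = 1) :
    ∀ n, 1 ≤ n → n ≤ m →
      Gfun d b c x y n (v n) ≤ (b/2)*(v 1 ⬝ᵥ v 1) + (∑ k ∈ Icc 1 n, Tfun d b c x y v k)
        + (c/2) * ∑ k ∈ Icc 2 n, ((v k - v (k-1)) ⬝ᵥ (v k - v (k-1))) := by
  intro n hn
  induction n, hn using Nat.le_induction with
  | base =>
    intro h1m
    have hy1 : (y 1)^2 = 1 := hy2 1 (by simp [Finset.mem_Icc]; omega)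
    have := lasec_start hb hbc x y hy1 (v 1)
    rw [show Icc 1 1 = {1} from Finset.Icc_self 1, Finset.sum_singleton,
      show Icc 2 1 = (∅ : Finset ℕ) from Finset.Icc_eq_empty (by omega), Finset.sum_empty]
    simp only [Gfun, Tfun]
    linarith
  | succ n hn ih =>
    intro hnm
    have hyn : (y (n+1))^2 = 1 := hy2 (n+1) (by simp [Finset.mem_Icc]; omega)
    have h1 := lasec_step hb hbc x y n hyn (v (n+1)) (v n)
    have h2 := ih (by omega)
    rw [Finset.sum_Icc_succ_top (by omega : 1 ≤ n+1), Finset.sum_Icc_succ_top (by omega : 2 ≤ n+1)]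
    simp only [Gfun, Tfun, Nat.add_sub_cancel] at h1 h2 ⊢
    linarith

end Lasec
end LasecAux

open LasecAux in
/-- inequality (a2). -/
theorem lasec_a2 (d : ℕ) (hd : 1 ≤ d) (b c : ℝ) (hb : 0 < b) (hbc : b < c)
    (m : ℕ) (hm : 1 ≤ m) (x : ℕ → Fin d → ℝ) (y : ℕ → ℝ)
    (hy : ∀ k ∈ Icc 1 m, y k = -1 ∨ y k = 1)
    (hmis : ∀ k ∈ Icc 1 m, y k * lasecPhat d b c x y k ≤ 0)
    (a γ : ℝ) (ha : 0 < a) (hγ : 0 < γ) (u : ℕ → Fin d → ℝ) :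
    ∑ k ∈ Icc 1 m, (|lasecPhat d b c x y k| + a) ≤
      (a / γ) * ∑ k ∈ Icc 1 m, hinge d x y γ k (u k)
      + (a ^ 2 / (2 * γ ^ 2)) *
          (b * (∑ i, (u 1 i) ^ 2)
            + c * ∑ k ∈ Icc 2 m, ∑ i, (u k i - u (k - 1) i) ^ 2
            + ∑ k ∈ Icc 1 m, (u k ⬝ᵥ x k) ^ 2)
      + (1 / 2) * ∑ k ∈ Icc 1 m, x k ⬝ᵥ ((lasecD d b c x k)⁻¹ *ᵥ x k) := by
  have hc : 0 < c := hb.trans hbc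
  set v : ℕ → Fin d → ℝ := fun k => (a/γ) • u k with hv
  have hy2 : ∀ k ∈ Icc 1 m, (y k)^2 = 1 := by
    intro k hk; rcases hy k hk with h | h <;> rw [h] <;> norm_num
  -- nonnegativity of G at m
  have hG0 : 0 ≤ Gfun d b c x y m (v m) := by
    have hq := quad_inv_lower (lasecD_posDef x hb hbc m) (lasecE d b c x y m) (v m)
    have hcm : lasecE d b c x y m ⬝ᵥ v m = v m ⬝ᵥ lasecE d b c x y m := dotProduct_comm _ _
    simp only [Gfun]
    linarith [hq, hcm ▸ hq]
  have htel := lasec_tele hb hbc x y v m hy2 m hm le_rfl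
  -- per-step inequality
  have hper : ∀ k ∈ Icc 1 m,
      |lasecPhat d b c x y k| + a ≤ (a/γ) * hinge d x y γ k (u k)
        + ((1/2)*(x k ⬝ᵥ ((lasecD d b c x k)⁻¹ *ᵥ x k)) + (1/2)*(v k ⬝ᵥ x k)^2
            - Tfun d b c x y v k) := by
    intro k hk
    have habs : |lasecPhat d b c x y k| = -(y k * lasecPhat d b c x y k) := by
      rcases hy k hk with h | h
      · rw [h]
        have := hmis k hk
        rw [h] at this
        rw [abs_of_nonneg (by linarith)]
        ring
      · rw [h]
        have := hmis k hk
        rw [h] at this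
        rw [abs_of_nonpos (by linarith)]
        ring
    have hvx : v k ⬝ᵥ x k = (a/γ) * (u k ⬝ᵥ x k) := by
      rw [hv]; exact smul_dotProduct _ _ _
    have hhinge : a - y k * (v k ⬝ᵥ x k) ≤ (a/γ) * hinge d x y γ k (u k) := by
      have h1 : γ - y k * (u k ⬝ᵥ x k) ≤ hinge d x y γ k (u k) := le_max_right _ _
      have h2 := mul_le_mul_of_nonneg_left h1 (by positivity : (0:ℝ) ≤ a/γ)
      rw [hvx]
      calc a - y k * ((a/γ) * (u k ⬝ᵥ x k)) = (a/γ) * (γ - y k * (u k ⬝ᵥ x k)) := by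
            field_simp
        _ ≤ (a/γ) * hinge d x y γ k (u k) := h2
    simp only [Tfun]
    linarith [habs, hhinge]
  -- sum up
  have hsum := Finset.sum_le_sum hper
  have hTsum : ∑ k ∈ Icc 1 m, ((a/γ) * hinge d x y γ k (u k)
      + ((1/2)*(x k ⬝ᵥ ((lasecD d b c x k)⁻¹ *ᵥ x k)) + (1/2)*(v k ⬝ᵥ x k)^2
          - Tfun d b c x y v k))
      = (a/γ) * (∑ k ∈ Icc 1 m, hinge d x y γ k (u k))
        + (1/2) * (∑ k ∈ Icc 1 m, x k ⬝ᵥ ((lasecD d b c x k)⁻¹ *ᵥ x k))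
        + (∑ k ∈ Icc 1 m, (1/2)*(v k ⬝ᵥ x k)^2)
        - (∑ k ∈ Icc 1 m, Tfun d b c x y v k) := by
    rw [Finset.mul_sum, Finset.mul_sum, ← Finset.sum_add_distrib, ← Finset.sum_add_distrib,
      ← Finset.sum_sub_distrib]
    exact Finset.sum_congr rfl fun k _ => by ring
  -- translate the v-quantities into u-quantities
  have hvsq : ∀ k, (1/2)*(v k ⬝ᵥ x k)^2 = (a^2/(2*γ^2)) * (u k ⬝ᵥ x k)^2 := by
    intro k
    have hvx : v k ⬝ᵥ x k = (a/γ) * (u k ⬝ᵥ x k) := smul_dotProduct _ _ _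
    rw [hvx]
    field_simp
  have hv1 : (b/2)*(v 1 ⬝ᵥ v 1) = (a^2/(2*γ^2)) * (b * ∑ i, (u 1 i)^2) := by
    have h1 : v 1 ⬝ᵥ v 1 = (a/γ) * ((a/γ) * (u 1 ⬝ᵥ u 1)) := by
      rw [hv]
      rw [smul_dotProduct, dotProduct_smul]
      simp [mul_assoc]
    have h2 : u 1 ⬝ᵥ u 1 = ∑ i, (u 1 i)^2 := by
      simp [dotProduct, sq]
    rw [h1, h2]
    field_simp
  have hdrift : (c/2) * ∑ k ∈ Icc 2 m, ((v k - v (k-1)) ⬝ᵥ (v k - v (k-1)))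
      = (a^2/(2*γ^2)) * (c * ∑ k ∈ Icc 2 m, ∑ i, (u k i - u (k-1) i)^2) := by
    have hk : ∀ k, (v k - v (k-1)) ⬝ᵥ (v k - v (k-1))
        = (a/γ)^2 * ∑ i, (u k i - u (k-1) i)^2 := by
      intro k
      have h1 : v k - v (k-1) = (a/γ) • (u k - u (k-1)) := by
        rw [hv, smul_sub]
      rw [h1, smul_dotProduct, dotProduct_smul]
      have h2 : (u k - u (k-1)) ⬝ᵥ (u k - u (k-1)) = ∑ i, (u k i - u (k-1) i)^2 := by
        simp [dotProduct, sq, Pi.sub_apply]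
      rw [h2]
      simp [sq]
      ring
    rw [Finset.sum_congr rfl fun k _ => hk k, ← Finset.mul_sum]
    field_simp
  have hvvsum : ∑ k ∈ Icc 1 m, (1/2)*(v k ⬝ᵥ x k)^2
      = (a^2/(2*γ^2)) * ∑ k ∈ Icc 1 m, (u k ⬝ᵥ x k)^2 := by
    rw [Finset.mul_sum]
    exact Finset.sum_congr rfl fun k _ => hvsq k
  rw [hTsum] at hsum
  have hmain : - ∑ k ∈ Icc 1 m, Tfun d b c x y v k
      ≤ (b/2)*(v 1 ⬝ᵥ v 1)
        + (c/2) * ∑ k ∈ Icc 2 m, ((v k - v (k-1)) ⬝ᵥ (v k - v (k-1))) := by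
    linarith [hG0, htel]
  calc ∑ k ∈ Icc 1 m, (|lasecPhat d b c x y k| + a)
      ≤ (a/γ) * (∑ k ∈ Icc 1 m, hinge d x y γ k (u k))
        + (1/2) * (∑ k ∈ Icc 1 m, x k ⬝ᵥ ((lasecD d b c x k)⁻¹ *ᵥ x k))
        + (∑ k ∈ Icc 1 m, (1/2)*(v k ⬝ᵥ x k)^2)
        - (∑ k ∈ Icc 1 m, Tfun d b c x y v k) := hsum
    _ ≤ (a/γ) * (∑ k ∈ Icc 1 m, hinge d x y γ k (u k))
        + (1/2) * (∑ k ∈ Icc 1 m, x k ⬝ᵥ ((lasecD d b c x k)⁻¹ *ᵥ x k))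
        + (∑ k ∈ Icc 1 m, (1/2)*(v k ⬝ᵥ x k)^2)
        + (b/2)*(v 1 ⬝ᵥ v 1)
        + (c/2) * ∑ k ∈ Icc 2 m, ((v k - v (k-1)) ⬝ᵥ (v k - v (k-1))) := by
        linarith [hmain]
    _ = (a / γ) * ∑ k ∈ Icc 1 m, hinge d x y γ k (u k)
      + (a ^ 2 / (2 * γ ^ 2)) *
          (b * (∑ i, (u 1 i) ^ 2)
            + c * ∑ k ∈ Icc 2 m, ∑ i, (u k i - u (k - 1) i) ^ 2
            + ∑ k ∈ Icc 1 m, (u k ⬝ᵥ x k) ^ 2)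
      + (1 / 2) * ∑ k ∈ Icc 1 m, x k ⬝ᵥ ((lasecD d b c x k)⁻¹ *ᵥ x k) := by
        rw [hvvsum, hv1, hdrift]
        ring

end
end

section
/- For every m ≥ 1 and every x_1, …, x_m ∈ ℝ^d: Σ_{k=1}^{m} x_kᵀ D_k^{−1} x_k ≤ ln det( (1/b) D_m ) + c^{−1} Σ_{k=1}^{m} Tr(D_{k−1}). -/
set_option autoImplicit false

open Matrix Finset

noncomputable section

variable {d : ℕ}

lemma myPosDef_smul {M : Matrix (Fin d) (Fin d) ℝ} (hM : M.PosDef) {r : ℝ} (hr : 0 < r) :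
    (r • M).PosDef := by
  refine Matrix.PosDef.of_dotProduct_mulVec_pos (by unfold Matrix.IsHermitian; rw [conjTranspose_smul, star_trivial, hM.isHermitian.eq]) fun y hy => ?_
  have := hM.dotProduct_mulVec_pos hy
  simpa [smul_mulVec, dotProduct_smul] using mul_pos hr this

lemma mytrace_eq {A : Matrix (Fin d) (Fin d) ℝ} (hA : A.IsHermitian) :
    A.trace = ∑ i, hA.eigenvalues i := by
  nth_rewrite 1 [hA.spectral_theorem]
  rw [Unitary.conjStarAlgAut_apply, Matrix.trace_mul_cycle]
  rw [Unitary.coe_star_mul_self, Matrix.one_mul, Matrix.trace_diagonal]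
  simp

lemma mylogdet_le {M : Matrix (Fin d) (Fin d) ℝ} (hM : M.PosDef) :
    Real.log M.det ≤ M.trace - d := by
  have hev := hM.eigenvalues_pos
  have hdet : M.det = ∏ i, hM.isHermitian.eigenvalues i := by
    simpa using hM.isHermitian.det_eq_prod_eigenvalues
  rw [hdet, Real.log_prod (fun i _ => (hev i).ne'), mytrace_eq hM.isHermitian]
  have : ∑ i, (hM.isHermitian.eigenvalues i - 1) = (∑ i, hM.isHermitian.eigenvalues i) - d := by
    rw [Finset.sum_sub_distrib]; simp
  rw [← this]
  exact Finset.sum_le_sum fun i _ => Real.log_le_sub_one_of_pos (hev i)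

lemma myvecMulVec_mulVec (v w : Fin d → ℝ) :
    vecMulVec v v *ᵥ w = (v ⬝ᵥ w) • v := by
  ext i
  simp only [mulVec, dotProduct, vecMulVec_apply, Pi.smul_apply, smul_eq_mul]
  rw [Finset.sum_mul]
  exact Finset.sum_congr rfl fun j _ => by ring

lemma myPSD_vecMulVec (v : Fin d → ℝ) : (vecMulVec v v).PosSemidef := by
  rw [vecMulVec_eq Unit]
  have := posSemidef_self_mul_conjTranspose (replicateCol Unit v)
  simpa [conjTranspose_replicateCol] using this

lemma mySM {A : Matrix (Fin d) (Fin d) ℝ} (hA : A.PosDef) (v : Fin d → ℝ) :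
    v ⬝ᵥ ((A + vecMulVec v v)⁻¹ *ᵥ v)
      = 1 - A.det / (A + vecMulVec v v).det := by
  set s := v ⬝ᵥ (A⁻¹ *ᵥ v) with hs
  have hs0 : 0 ≤ s := by
    simpa using hA.inv.posSemidef.dotProduct_mulVec_nonneg v
  have hs1 : (0:ℝ) < 1 + s := by linarith
  have hAdet : IsUnit A.det := isUnit_iff_ne_zero.2 hA.det_pos.ne'
  have hE : (A + vecMulVec v v).PosDef := hA.add_posSemidef (myPSD_vecMulVec v)
  have hEdet : IsUnit (A + vecMulVec v v).det := isUnit_iff_ne_zero.2 hE.det_pos.ne'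
  have hdet : (A + vecMulVec v v).det = A.det * (1 + s) := by
    rw [vecMulVec_eq Unit, det_add_replicateCol_mul_replicateRow hAdet]
    congr 1
    rw [Matrix.mul_assoc, ← replicateCol_mulVec, det_unique]
    simp [replicateRow_mul_replicateCol_apply, hs]
  have h1 : (A + vecMulVec v v) *ᵥ ((1 + s)⁻¹ • (A⁻¹ *ᵥ v)) = v := by
    rw [mulVec_smul, add_mulVec, mulVec_mulVec, mul_nonsing_inv _ hAdet, one_mulVec,
      myvecMulVec_mulVec, ← hs, smul_add, smul_smul, ← add_smul]
    rw [show (1+s)⁻¹ + (1+s)⁻¹ * s = (1+s)⁻¹ * (1+s) by ring, inv_mul_cancel₀ hs1.ne',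
      one_smul]
  have hEv : (A + vecMulVec v v)⁻¹ *ᵥ v = (1 + s)⁻¹ • (A⁻¹ *ᵥ v) := by
    have h2 := congrArg (fun u => (A + vecMulVec v v)⁻¹ *ᵥ u) h1
    simpa [mulVec_mulVec, nonsing_inv_mul _ hEdet, one_mulVec] using h2.symm
  rw [hEv, hdet, dotProduct_smul, smul_eq_mul, ← hs]
  have hAd : A.det ≠ 0 := hA.det_pos.ne'
  field_simp
  ring

lemma mystep {D : Matrix (Fin d) (Fin d) ℝ} (hD : D.PosDef) {c : ℝ} (hc : 0 < c)
    (v : Fin d → ℝ) :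
    v ⬝ᵥ (((D⁻¹ + c⁻¹ • 1)⁻¹ + vecMulVec v v)⁻¹ *ᵥ v)
      ≤ Real.log ((D⁻¹ + c⁻¹ • 1)⁻¹ + vecMulVec v v).det - Real.log D.det + c⁻¹ * D.trace := by
  have hc' : (0:ℝ) < c⁻¹ := inv_pos.2 hc
  have hone : (1 : Matrix (Fin d) (Fin d) ℝ).PosDef := Matrix.PosDef.one
  have hB : (D⁻¹ + c⁻¹ • (1 : Matrix (Fin d) (Fin d) ℝ)).PosDef :=
    hD.inv.add (myPosDef_smul hone hc')
  have hA : ((D⁻¹ + c⁻¹ • (1 : Matrix (Fin d) (Fin d) ℝ))⁻¹).PosDef := hB.inv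
  set A := (D⁻¹ + c⁻¹ • (1 : Matrix (Fin d) (Fin d) ℝ))⁻¹ with hAdef
  have hE : (A + vecMulVec v v).PosDef := hA.add_posSemidef (myPSD_vecMulVec v)
  have hC : (1 + c⁻¹ • D).PosDef := hone.add_posSemidef (myPosDef_smul hD hc').posSemidef
  -- A.det = D.det / (1 + c⁻¹ • D).det
  have hfact : D⁻¹ + c⁻¹ • (1 : Matrix (Fin d) (Fin d) ℝ) = D⁻¹ * (1 + c⁻¹ • D) := by
    rw [Matrix.mul_add, Matrix.mul_one, Matrix.mul_smul,
      nonsing_inv_mul _ (isUnit_iff_ne_zero.2 hD.det_pos.ne')]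
  have hdetA : A.det = D.det / (1 + c⁻¹ • D).det := by
    rw [hAdef, det_nonsing_inv, hfact, det_mul, det_nonsing_inv, Ring.inverse_eq_inv']
    rw [mul_inv, inv_inv, div_eq_mul_inv]
  have hlogA : Real.log A.det = Real.log D.det - Real.log (1 + c⁻¹ • D).det := by
    rw [hdetA, Real.log_div hD.det_pos.ne' hC.det_pos.ne']
  -- log det (1 + c⁻¹ D) ≤ c⁻¹ trace D
  have htr : Real.log (1 + c⁻¹ • D).det ≤ c⁻¹ * D.trace := by
    have := mylogdet_le hC
    have htr2 : (1 + c⁻¹ • D).trace = d + c⁻¹ * D.trace := by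
      rw [trace_add, trace_smul, trace_one]
      simp
    rw [htr2] at this
    linarith
  -- 1 - t ≤ log E - log A
  have hSM := mySM hA v
  set t := A.det / (A + vecMulVec v v).det with ht
  have htpos : 0 < t := div_pos hA.det_pos hE.det_pos
  have hlt := Real.log_le_sub_one_of_pos htpos
  have hlogt : Real.log t = Real.log A.det - Real.log (A + vecMulVec v v).det := by
    rw [ht, Real.log_div hA.det_pos.ne' hE.det_pos.ne']
  rw [hSM]
  rw [hlogt] at hlt
  rw [hlogA] at hlt
  linarith


lemma mylogdet_smul {M : Matrix (Fin d) (Fin d) ℝ} (hM : 0 < M.det) {r : ℝ} (hr : 0 < r) :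
    Real.log ((r • M).det) = d * Real.log r + Real.log M.det := by
  rw [det_smul, Real.log_mul (pow_ne_zero _ hr.ne') hM.ne', Real.log_pow]
  simp

/-- `Σ_{k=1}^m x_kᵀ D_k⁻¹ x_k ≤ ln det((1/b) D_m) + c⁻¹ Σ_{k=1}^m Tr(D_{k-1})`. -/
theorem lasec_logdet_bound (d : ℕ) (hd : 1 ≤ d) (b c : ℝ) (hb : 0 < b) (hbc : b < c)
    (m : ℕ) (hm : 1 ≤ m) (x : ℕ → Fin d → ℝ) :
    ∑ k ∈ Icc 1 m, x k ⬝ᵥ ((lasecD d b c x k)⁻¹ *ᵥ x k) ≤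
      Real.log ((b⁻¹ • lasecD d b c x m).det)
        + c⁻¹ * ∑ k ∈ Icc 1 m, (lasecD d b c x (k - 1)).trace := by
  have hcb : 0 < c - b := by linarith
  have hc : 0 < c := by linarith
  have hPD : ∀ k, (lasecD d b c x k).PosDef := by
    intro k
    induction k with
    | zero =>
      exact myPosDef_smul Matrix.PosDef.one (by positivity)
    | succ n ih =>
      exact (ih.inv.add (myPosDef_smul Matrix.PosDef.one (inv_pos.2 hc))).inv.add_posSemidef
        (myPSD_vecMulVec _)
  clear hm
  induction m with
  | zero =>
    rw [show Finset.Icc 1 0 = ∅ from rfl]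
    simp only [Finset.sum_empty, mul_zero, add_zero]
    have : b⁻¹ • lasecD d b c x 0 = (c / (c - b)) • (1 : Matrix (Fin d) (Fin d) ℝ) := by
      show b⁻¹ • ((b * c / (c - b)) • (1 : Matrix (Fin d) (Fin d) ℝ)) = _
      rw [smul_smul]
      congr 1
      field_simp
    rw [this, det_smul, det_one, mul_one]
    apply Real.log_nonneg
    apply one_le_pow₀
    rw [le_div_iff₀ hcb]
    linarith
  | succ n ih =>
    rw [Finset.sum_Icc_succ_top (Nat.succ_le_succ (Nat.zero_le n)),
      Finset.sum_Icc_succ_top (Nat.succ_le_succ (Nat.zero_le n))]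
    have hstep := mystep (hPD n) hc (x (n + 1))
    have hkey : x (n+1) ⬝ᵥ ((lasecD d b c x (n+1))⁻¹ *ᵥ x (n+1))
        ≤ Real.log ((b⁻¹ • lasecD d b c x (n+1)).det)
          - Real.log ((b⁻¹ • lasecD d b c x n).det)
          + c⁻¹ * (lasecD d b c x n).trace := by
      rw [mylogdet_smul (hPD (n+1)).det_pos (inv_pos.2 hb),
        mylogdet_smul (hPD n).det_pos (inv_pos.2 hb)]
      have : lasecD d b c x (n+1)
          = ((lasecD d b c x n)⁻¹ + c⁻¹ • 1)⁻¹ + vecMulVec (x (n+1)) (x (n+1)) := rfl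
      rw [this]
      convert hstep using 1
      ring
    have : (n + 1 : ℕ) - 1 = n := rfl
    rw [this, mul_add]
    linarith
end
end
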